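/- (Bound on dominating jobs of smaller laxity.) Let α ∈ (0,1), let J be a finite set of jobs feasible on m machines, and let j ∈ J be α-tight. Then the number of jobs j' ∈ J \ {j} with I(j) ⊆ I(j') and ℓ_{j'} ≤ ℓ_j is at most m/α. -/

import Mathlib

/-- A job given by integer release date `r`, deadline `d`, and processing time `p`. -/
structure Job where
  r : ℤ
  d : ℤ
  p : ℤ
deriving DecidableEq

/-- A job is valid if `1 ≤ p` and `r + p ≤ d`. -/
def Job.valid (j : Job) : Prop := 1 ≤ j.p ∧ j.r + j.p ≤ j.d

/-- The interval `I(j) = {t ∈ ℤ : r ≤ t < d}` of a job. -/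
noncomputable def Job.interval (j : Job) : Finset ℤ := Finset.Ico j.r j.d

/-- The laxity `ℓ_j = d - r - p` of a job. -/
def Job.lax (j : Job) : ℤ := j.d - j.r - j.p

/-- The contribution `C(j, I) = max {0, |I ∩ I(j)| - ℓ_j}` of a job to a finite set `I ⊆ ℤ`. -/
noncomputable def contribution (j : Job) (I : Finset ℤ) : ℤ :=
  max 0 (((I ∩ j.interval).card : ℤ) - j.lax)

/-- A finite set of jobs `J` is feasible on `m` machines. -/
def Feasible (J : Finset Job) (m : ℕ) : Prop :=
  ∃ σ : ℤ → Finset Job,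
    (∀ t, σ t ⊆ J) ∧
    (∀ t, (σ t).card ≤ m) ∧
    (∀ t, ∀ j ∈ σ t, j.r ≤ t ∧ t < j.d) ∧
    (∀ j ∈ J, ((Finset.Ico j.r j.d).filter (fun t => j ∈ σ t)).card = j.p.toNat)

/-- A job is `α`-tight if `p_j > α (d_j - r_j)`. -/
def AlphaTight (α : ℝ) (j : Job) : Prop := α * ((j.d : ℝ) - (j.r : ℝ)) < (j.p : ℝ)

/-- The `β`-interval `I_β(j) = [r_j + βℓ_j, d_j - βℓ_j)` of a job (a real interval). -/
def betaInterval (β : ℝ) (j : Job) : Set ℝ :=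
  Set.Ico ((j.r : ℝ) + β * (j.lax : ℝ)) ((j.d : ℝ) - β * (j.lax : ℝ))

/-- Two jobs are agreeable if `(r_j - r_{j'})·(d_j - d_{j'}) ≥ 0`. -/
def Agreeable (j j' : Job) : Prop :=
  0 ≤ ((j.r : ℝ) - (j'.r : ℝ)) * ((j.d : ℝ) - (j'.d : ℝ))

/-- Two jobs are `β`-agreeable if they are agreeable and their `β`-intervals intersect. -/
def BetaAgreeable (β : ℝ) (j j' : Job) : Prop :=
  Agreeable j j' ∧ (betaInterval β j ∩ betaInterval β j').Nonempty

/-- bound on dominating jobs of smaller laxity: if `j ∈ J` is α-tight,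
at most `m/α` jobs `j' ≠ j` of `J` satisfy `I(j) ⊆ I(j')` and `ℓ_{j'} ≤ ℓ_j`. -/
theorem dominating_small_laxity_bound
    (α : ℝ) (hα : α ∈ Set.Ioo (0 : ℝ) 1)
    (J : Finset Job) (hJ : ∀ j ∈ J, j.valid) (m : ℕ) (hfeas : Feasible J m)
    (j : Job) (hj : j ∈ J) (htight : AlphaTight α j) :
    ({j' : Job | j' ∈ J ∧ j' ≠ j ∧ j.interval ⊆ j'.interval ∧ j'.lax ≤ j.lax}.ncard : ℝ)
        ≤ (m : ℝ) / α := by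
  obtain ⟨hα0, hα1⟩ := hα
  obtain ⟨σ, hσJ, hσm, hσtime, hσp⟩ := hfeas
  obtain ⟨hp1, hpd⟩ := hJ j hj
  classical
  set S : Finset Job := J.filter (fun k => j.interval ⊆ k.interval ∧ k.lax ≤ j.lax) with hS
  have hjS : j ∈ S := by
    simp only [hS, Finset.mem_filter]
    exact ⟨hj, le_refl _, le_refl _⟩
  -- per-job lower bound on scheduled time inside j.interval
  have key : ∀ k ∈ S, j.p.toNat ≤ ((j.interval).filter (fun t => k ∈ σ t)).card := by
    intro k hk
    simp only [hS, Finset.mem_filter] at hk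
    obtain ⟨hkJ, hsub, hlax⟩ := hk
    obtain ⟨hkp1, hkpd⟩ := hJ k hkJ
    have hA := hσp k hkJ
    set A := (Finset.Ico k.r k.d).filter (fun t => k ∈ σ t) with hAdef
    set T := (j.interval).filter (fun t => k ∈ σ t) with hTdef
    have hTA : T ⊆ A := by
      intro t ht
      simp only [hTdef, Finset.mem_filter] at ht
      simp only [hAdef, Finset.mem_filter]
      exact ⟨hsub ht.1, ht.2⟩
    have hdiff : A \ T ⊆ k.interval \ j.interval := by
      intro t ht
      simp only [hAdef, hTdef, Finset.mem_sdiff, Finset.mem_filter] at ht ⊢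
      refine ⟨ht.1.1, fun htj => ht.2 ⟨htj, ht.1.2⟩⟩
    have hcard1 : (A \ T).card ≤ (k.interval \ j.interval).card := Finset.card_le_card hdiff
    have hcard2 : (k.interval \ j.interval).card = k.interval.card - j.interval.card :=
      Finset.card_sdiff_of_subset hsub
    have hATcard : (A \ T).card + T.card = A.card := Finset.card_sdiff_add_card_eq_card hTA
    have hkI : (k.interval.card : ℤ) = k.d - k.r := by
      simp [Job.interval, Int.card_Ico]
      omega
    have hjI : (j.interval.card : ℤ) = j.d - j.r := by
      simp [Job.interval, Int.card_Ico]
      omega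
    have hIsub : j.interval.card ≤ k.interval.card := Finset.card_le_card hsub
    have hpk : (A.card : ℤ) = k.p := by rw [hA]; omega
    have hTz : (j.p : ℤ) ≤ (T.card : ℤ) := by
      have h1 : ((A \ T).card : ℤ) ≤ (k.d - k.r) - (j.d - j.r) := by
        have := hcard1
        have h2 : ((k.interval \ j.interval).card : ℤ)
            = (k.interval.card : ℤ) - (j.interval.card : ℤ) := by
          rw [hcard2]; push_cast [Nat.cast_sub hIsub]; ring
        rw [hkI, hjI] at h2
        calc ((A \ T).card : ℤ) ≤ ((k.interval \ j.interval).card : ℤ) := by exact_mod_cast hcard1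
          _ = (k.d - k.r) - (j.d - j.r) := h2
      have h3 : ((A \ T).card : ℤ) + (T.card : ℤ) = (A.card : ℤ) := by exact_mod_cast hATcard
      have hlax' : k.lax ≤ j.lax := hlax
      simp only [Job.lax] at hlax'
      omega
    omega
  -- double counting
  have hsum : S.card * j.p.toNat ≤ m * j.interval.card := by
    calc S.card * j.p.toNat = ∑ _k ∈ S, j.p.toNat := by
          rw [Finset.sum_const, smul_eq_mul]
      _ ≤ ∑ k ∈ S, ((j.interval).filter (fun t => k ∈ σ t)).card := Finset.sum_le_sum key
      _ = ∑ t ∈ j.interval, (S.filter (fun k => k ∈ σ t)).card := by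
          simp only [Finset.card_filter]
          exact Finset.sum_comm
      _ ≤ ∑ _t ∈ j.interval, m := by
          refine Finset.sum_le_sum fun t _ => ?_
          refine le_trans (Finset.card_le_card ?_) (hσm t)
          intro k hk
          exact (Finset.mem_filter.mp hk).2
      _ = j.interval.card * m := by rw [Finset.sum_const, smul_eq_mul]
      _ = m * j.interval.card := mul_comm _ _
  -- identify the set with the finset S.erase j
  have hset : {j' : Job | j' ∈ J ∧ j' ≠ j ∧ j.interval ⊆ j'.interval ∧ j'.lax ≤ j.lax}
      = ↑(S.erase j) := by
    ext k
    simp only [Set.mem_setOf_eq, Finset.coe_erase, Set.mem_diff, Finset.mem_coe,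
      Finset.mem_filter, hS, Set.mem_singleton_iff]
    tauto
  rw [hset, Set.ncard_coe_finset]
  have hNle : ((S.erase j).card : ℝ) ≤ (S.card : ℝ) := by
    exact_mod_cast Finset.card_le_card (Finset.erase_subset _ _)
  refine le_trans hNle ?_
  -- real arithmetic
  have hL0 : (0 : ℝ) < (j.d : ℝ) - (j.r : ℝ) := by
    have : j.r < j.d := by omega
    exact_mod_cast sub_pos.mpr (by exact_mod_cast this)
  have hjI : (j.interval.card : ℝ) = (j.d : ℝ) - (j.r : ℝ) := by
    have : (j.interval.card : ℤ) = j.d - j.r := by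
      simp [Job.interval, Int.card_Ico]; omega
    exact_mod_cast this
  have hpnat : ((j.p.toNat : ℤ) : ℝ) = (j.p : ℝ) := by
    have : (j.p.toNat : ℤ) = j.p := Int.toNat_of_nonneg (by omega)
    exact_mod_cast this
  have hsumR : (S.card : ℝ) * (j.p : ℝ) ≤ (m : ℝ) * ((j.d : ℝ) - (j.r : ℝ)) := by
    have := hsum
    have h : ((S.card : ℕ) : ℝ) * ((j.p.toNat : ℕ) : ℝ) ≤ (m : ℝ) * (j.interval.card : ℝ) := by
      exact_mod_cast this
    rw [hjI] at h
    calc (S.card : ℝ) * (j.p : ℝ) = (S.card : ℝ) * ((j.p.toNat : ℕ) : ℝ) := by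
          rw [show ((j.p.toNat : ℕ) : ℝ) = (j.p : ℝ) from by exact_mod_cast hpnat]
      _ ≤ _ := h
  rw [le_div_iff₀ hα0]
  have htight' : α * ((j.d : ℝ) - (j.r : ℝ)) < (j.p : ℝ) := htight
  nlinarith [Nat.cast_nonneg (α := ℝ) S.card, hsumR, htight', hL0, hα0]
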